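/- Momentum epoch inequality: Consider the momentum-accelerated VR-SGD (Algorithm 3, Option II) on F = f + g with F being L-smooth, step η_0 = 1/(α₁ L) with α₁ > 2 and momentum weight w_s ∈ (0, 1] satisfying 1 − w_s − 1/(α₁−1) ≥ 0. Then for every epoch s: E[F(x̃^s) − F(x*)] ≤ (1 − w_s)[F(x̃^{s−1}) − F(x*)] + (w_s²/(2 m η_0)) E[‖x* − v_0^s‖² − ‖x* − v_m^s‖²]. -/

import Mathlib

open scoped BigOperators
open scoped RealInnerProductSpace

section AuxLemmas

variable {H : Type*} [NormedAddCommGroup H] [InnerProductSpace ℝ H] [CompleteSpace H]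

lemma aux_hga_inner (a z : H) : HasGradientAt (fun y => ⟪a, y⟫) a z := by
  have h : HasFDerivAt (fun y => ⟪a, y⟫)
      ((InnerProductSpace.toDual ℝ H) a) z := by
    exact ((InnerProductSpace.toDual ℝ H) a).hasFDerivAt (x := z)
  rw [hasFDerivAt_iff_hasGradientAt] at h
  simpa using h

lemma aux_hga_add {φ ψ : H → ℝ} {p q : H} {z : H} (h1 : HasGradientAt φ p z)
    (h2 : HasGradientAt ψ q z) : HasGradientAt (fun y => φ y + ψ y) (p + q) z := by
  have h := h1.hasFDerivAt.add h2.hasFDerivAt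
  rw [hasFDerivAt_iff_hasGradientAt] at h
  exact (by simpa using h : HasGradientAt (φ + ψ) (p + q) z)

lemma aux_hga_sub {φ ψ : H → ℝ} {p q : H} {z : H} (h1 : HasGradientAt φ p z)
    (h2 : HasGradientAt ψ q z) : HasGradientAt (fun y => φ y - ψ y) (p - q) z := by
  have h := h1.hasFDerivAt.sub h2.hasFDerivAt
  rw [hasFDerivAt_iff_hasGradientAt] at h
  exact (by simpa using h : HasGradientAt (φ - ψ) (p - q) z)

lemma aux_hga_const_mul {φ : H → ℝ} {p : H} {z : H} (c : ℝ) (h : HasGradientAt φ p z) :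
    HasGradientAt (fun y => c * φ y) (c • p) z := by
  have h' := h.hasFDerivAt.const_mul c
  rw [hasFDerivAt_iff_hasGradientAt] at h'
  simpa using h'

lemma aux_hga_sum {ι : Type*} (s : Finset ι) (φ : ι → H → ℝ) (p : ι → H) (z : H)
    (h : ∀ i ∈ s, HasGradientAt (φ i) (p i) z) :
    HasGradientAt (fun y => ∑ i ∈ s, φ i y) (∑ i ∈ s, p i) z := by
  classical
  induction s using Finset.induction_on with
  | empty => simpa using (hasGradientAt_const (x := z) (c := (0:ℝ)))
  | insert a t hni ih =>
      have h1 := h a (Finset.mem_insert_self a t)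
      have h2 := ih (fun i hi => h i (Finset.mem_insert_of_mem hi))
      have := aux_hga_add h1 h2
      simpa [Finset.sum_insert hni] using this


lemma aux_chain {φ : H → ℝ} {G : H → H} (hG : ∀ z, HasGradientAt φ (G z) z)
    (a b : H) (t : ℝ) :
    HasDerivAt (fun s : ℝ => φ (a + s • (b - a))) (⟪G (a + t • (b - a)), b - a⟫) t := by
  have hγ : HasDerivAt (fun s : ℝ => a + s • (b - a)) (b - a) t := by
    simpa using ((hasDerivAt_id t).smul_const (b - a)).const_add a
  have hφ := (hG (a + t • (b - a))).hasFDerivAt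
  have := hφ.comp_hasDerivAt t hγ
  simpa [InnerProductSpace.toDual_apply_apply, Function.comp_def] using this

lemma aux_descent {φ : H → ℝ} {G : H → H} {K : ℝ} (hK : 0 ≤ K)
    (hG : ∀ z, HasGradientAt φ (G z) z)
    (hlip : ∀ a b, ‖G a - G b‖ ≤ K * ‖a - b‖) (a b : H) :
    φ b ≤ φ a + ⟪G a, b - a⟫ + K / 2 * ‖b - a‖ ^ 2 := by
  have hGcont : Continuous G := by
    have : LipschitzWith (Real.toNNReal K) G := by
      apply LipschitzWith.of_dist_le_mul
      intro p q
      simpa [dist_eq_norm, Real.coe_toNNReal K hK] using hlip p q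
    exact this.continuous
  set γ : ℝ → H := fun s => a + s • (b - a) with hγdef
  have hγc : Continuous γ := by continuity
  have hcont : Continuous fun t : ℝ => ⟪G (γ t), b - a⟫ :=
    (hGcont.comp hγc).inner continuous_const
  have hint : ∫ t in (0:ℝ)..1, ⟪G (γ t), b - a⟫ = φ b - φ a := by
    have h0 : γ 0 = a := by simp [hγdef]
    have h1 : γ 1 = b := by simp [hγdef]
    have := intervalIntegral.integral_eq_sub_of_hasDerivAt
      (f := fun s : ℝ => φ (γ s)) (f' := fun t => ⟪G (γ t), b - a⟫)
      (fun t _ => aux_chain hG a b t) (hcont.intervalIntegrable 0 1)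
    rw [this, h0, h1]
  have hmono : ∫ t in (0:ℝ)..1, ⟪G (γ t), b - a⟫
      ≤ ∫ t in (0:ℝ)..1, (⟪G a, b - a⟫ + K * t * ‖b - a‖ ^ 2) := by
    apply intervalIntegral.integral_mono_on (by norm_num)
      (hcont.intervalIntegrable 0 1)
      ((by continuity : Continuous fun t : ℝ => ⟪G a, b - a⟫ + K * t * ‖b - a‖ ^ 2).intervalIntegrable 0 1)
    intro t ht
    rcases ht with ⟨ht0, ht1⟩
    have key : ⟪G (γ t) - G a, b - a⟫ ≤ K * t * ‖b - a‖ ^ 2 := by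
      calc ⟪G (γ t) - G a, b - a⟫ ≤ ‖G (γ t) - G a‖ * ‖b - a‖ := real_inner_le_norm _ _
        _ ≤ (K * ‖γ t - a‖) * ‖b - a‖ := by
            have := hlip (γ t) a
            nlinarith [norm_nonneg (b - a)]
        _ = K * t * ‖b - a‖ ^ 2 := by
            have : ‖γ t - a‖ = t * ‖b - a‖ := by
              simp [hγdef, norm_smul, abs_of_nonneg ht0]
            rw [this]; ring
    have expand : ⟪G (γ t) - G a, b - a⟫ = ⟪G (γ t), b - a⟫ - ⟪G a, b - a⟫ := by
      rw [inner_sub_left]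
    linarith
  have hval : ∫ t in (0:ℝ)..1, (⟪G a, b - a⟫ + K * t * ‖b - a‖ ^ 2)
      = ⟪G a, b - a⟫ + K / 2 * ‖b - a‖ ^ 2 := by
    rw [intervalIntegral.integral_add]
    · rw [intervalIntegral.integral_const]
      have : ∫ t in (0:ℝ)..1, K * t * ‖b - a‖ ^ 2
          = (K * ‖b - a‖ ^ 2) * ∫ t in (0:ℝ)..1, t := by
        rw [← intervalIntegral.integral_const_mul]
        congr 1; ext t; ring
      rw [this, integral_id]
      simp; ring
    · exact intervalIntegrable_const
    · exact ((by continuity : Continuous fun t : ℝ => K * t * ‖b - a‖ ^ 2)).intervalIntegrable 0 1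
  rw [hval] at hmono
  rw [hint] at hmono
  linarith


lemma aux_support {φ : H → ℝ} {G : H → H} (hG : ∀ z, HasGradientAt φ (G z) z)
    (hc : ConvexOn ℝ Set.univ φ) (a b : H) :
    ⟪G a, b - a⟫ ≤ φ b - φ a := by
  set ψ : ℝ → ℝ := fun s => φ (a + s • (b - a)) with hψ
  have hd : HasDerivAt ψ (⟪G a, b - a⟫) 0 := by
    have hγ : HasDerivAt (fun s : ℝ => a + s • (b - a)) (b - a) 0 := by
      simpa using ((hasDerivAt_id (0:ℝ)).smul_const (b - a)).const_add a
    have hφ := (hG (a + (0:ℝ) • (b - a))).hasFDerivAt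
    have := hφ.comp_hasDerivAt 0 hγ
    simpa [InnerProductSpace.toDual_apply_apply, Function.comp_def] using this
  have hslope : Filter.Tendsto (slope ψ 0) (nhdsWithin 0 {(0:ℝ)}ᶜ) (nhds (⟪G a, b - a⟫)) :=
    hasDerivAt_iff_tendsto_slope.1 hd
  have hslope' : Filter.Tendsto (slope ψ 0) (nhdsWithin 0 (Set.Ioi 0)) (nhds (⟪G a, b - a⟫)) :=
    hslope.mono_left (nhdsWithin_mono 0 (fun t ht => by
      simp only [Set.mem_compl_iff, Set.mem_singleton_iff]
      exact ne_of_gt ht))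
  refine le_of_tendsto hslope' ?_
  filter_upwards [Ioc_mem_nhdsGT_of_mem (Set.left_mem_Ico.2 one_pos)] with t ht
  rcases ht with ⟨ht0, ht1⟩
  have hcv : ψ t ≤ (1 - t) * φ a + t * φ b := by
    have := hc.2 (Set.mem_univ a) (Set.mem_univ b) (by linarith : (0:ℝ) ≤ 1 - t)
      (le_of_lt ht0) (by ring)
    have harg : (1 - t) • a + t • b = a + t • (b - a) := by
      simp [smul_sub, sub_smul]; abel
    simpa [harg, smul_eq_mul] using this
  have hψ0 : ψ 0 = φ a := by simp [hψ]
  rw [slope_def_field]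
  have : (ψ t - ψ 0) / t ≤ φ b - φ a := by
    rw [div_le_iff₀ ht0, hψ0]
    nlinarith
  simpa [div_sub_div_same, hψ0] using this

lemma aux_convexOn_inner (c : H) : ConvexOn ℝ Set.univ (fun z : H => ⟪c, z⟫) := by
  constructor
  · exact convex_univ
  · intro p _ q _ s t _ _ _
    simp [inner_add_right, real_inner_smul_right, smul_eq_mul]

lemma aux_cocoercive {φ : H → ℝ} {G : H → H} {K : ℝ} (hK : 0 < K)
    (hG : ∀ z, HasGradientAt φ (G z) z) (hc : ConvexOn ℝ Set.univ φ)
    (hlip : ∀ a b, ‖G a - G b‖ ≤ K * ‖a - b‖) (a b : H) :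
    ‖G a - G b‖ ^ 2 ≤ 2 * K * (φ a - φ b - ⟪G b, a - b⟫) := by
  set h : H → ℝ := fun z => φ z - ⟪G b, z⟫ with hh
  set Gh : H → H := fun z => G z - G b with hGh
  have hGh' : ∀ z, HasGradientAt h (Gh z) z := fun z =>
    aux_hga_sub (hG z) (aux_hga_inner (G b) z)
  have hlip' : ∀ p q, ‖Gh p - Gh q‖ ≤ K * ‖p - q‖ := by
    intro p q; simpa [hGh, sub_sub_sub_cancel_right] using hlip p q
  have hcv : ConvexOn ℝ Set.univ h := by
    have h2 := hc.add (aux_convexOn_inner (-G b))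
    have heq : (fun z => φ z + ⟪-G b, z⟫) = h := by
      funext z; simp [hh, inner_neg_left]; ring
    have : (φ + fun z => ⟪-G b, z⟫) = h := by
      funext z; simp [hh, inner_neg_left]; ring
    rwa [this] at h2
  have hmin : ∀ z, h b ≤ h z := by
    intro z
    have := aux_support hGh' hcv b z
    simp only [hGh, sub_self] at this
    simpa using this
  have hdesc := aux_descent (le_of_lt hK) hGh' hlip' a (a - K⁻¹ • Gh a)
  have hz : h b ≤ h (a - K⁻¹ • Gh a) := hmin _
  have hsimp : h (a - K⁻¹ • Gh a) ≤ h a - (1 / (2 * K)) * ‖Gh a‖ ^ 2 := by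
    have h1 : (a - K⁻¹ • Gh a) - a = -(K⁻¹ • Gh a) := by abel
    rw [h1] at hdesc
    have h2 : ⟪Gh a, -(K⁻¹ • Gh a)⟫ = -(K⁻¹ * ‖Gh a‖ ^ 2) := by
      rw [inner_neg_right, real_inner_smul_right, real_inner_self_eq_norm_sq]
    have h3 : ‖-(K⁻¹ • Gh a)‖ ^ 2 = K⁻¹ ^ 2 * ‖Gh a‖ ^ 2 := by
      rw [norm_neg, norm_smul]
      rw [Real.norm_eq_abs, abs_of_pos (inv_pos.2 hK)]
      ring
    rw [h2, h3] at hdesc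
    have hKne : K ≠ 0 := ne_of_gt hK
    calc h (a - K⁻¹ • Gh a) ≤ h a + -(K⁻¹ * ‖Gh a‖ ^ 2) + K / 2 * (K⁻¹ ^ 2 * ‖Gh a‖ ^ 2) :=
          hdesc
      _ = h a - (1 / (2 * K)) * ‖Gh a‖ ^ 2 := by field_simp; ring
  have hfin : h b ≤ h a - (1 / (2 * K)) * ‖Gh a‖ ^ 2 := le_trans hz hsimp
  have hval : h a - h b = φ a - φ b - ⟪G b, a - b⟫ := by
    simp only [hh, inner_sub_right]
    ring
  have : (1 / (2 * K)) * ‖Gh a‖ ^ 2 ≤ h a - h b := by linarith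
  rw [hval] at this
  have hKpos : (0:ℝ) < 2 * K := by linarith
  calc ‖G a - G b‖ ^ 2 = (2 * K) * ((1 / (2 * K)) * ‖Gh a‖ ^ 2) := by
        field_simp [hGh]
        rfl
    _ ≤ 2 * K * (φ a - φ b - ⟪G b, a - b⟫) := by
        apply mul_le_mul_of_nonneg_left this (le_of_lt hKpos)


lemma aux_convexOn_sum {H : Type*} [NormedAddCommGroup H] [InnerProductSpace ℝ H]
    {ι : Type*} (s : Finset ι) (φ : ι → H → ℝ)
    (h : ∀ i ∈ s, ConvexOn ℝ Set.univ (φ i)) :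
    ConvexOn ℝ Set.univ (fun z => ∑ i ∈ s, φ i z) := by
  classical
  induction s using Finset.induction_on with
  | empty => simpa using convexOn_const (0:ℝ) convex_univ
  | insert a t hni ih =>
      have h1 := h a (Finset.mem_insert_self a t)
      have h2 := ih (fun i hi => h i (Finset.mem_insert_of_mem hi))
      have := h1.add h2
      have heq : (φ a + fun z => ∑ i ∈ t, φ i z) = fun z => ∑ i ∈ insert a t, φ i z := by
        funext z; simp [Finset.sum_insert hni]
      rwa [heq] at this

lemma aux_avg {n mm : ℕ} (hn : 0 < n) (k : Fin mm) {α : Type*}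
    (X : (Fin mm → Fin n) → α)
    (hX : ∀ ω ω' : Fin mm → Fin n, (∀ j : Fin mm, (j : ℕ) < (k : ℕ) → ω j = ω' j) →
      X ω = X ω')
    (h : α → Fin n → ℝ) (R : α → ℝ)
    (hpt : ∀ p, ∑ i, h p i ≤ (n : ℝ) * R p) :
    ∑ ω : Fin mm → Fin n, h (X ω) (ω k) ≤ ∑ ω : Fin mm → Fin n, R (X ω) := by
  classical
  set e := Equiv.funSplitAt k (Fin n) with he
  have i0 : Fin n := ⟨0, hn⟩
  have happ : ∀ (a : Fin n) ρ, (e.symm (a, ρ)) k = a := by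
    intro a ρ; simp [he, Equiv.funSplitAt, Equiv.piSplitAt]
  have happ' : ∀ (a : Fin n) ρ (j : Fin mm) (hj : j ≠ k), (e.symm (a, ρ)) j = ρ ⟨j, hj⟩ := by
    intro a ρ j hj; simp [he, Equiv.funSplitAt, Equiv.piSplitAt, dif_neg hj]
  have key : ∀ a ρ, X (e.symm (a, ρ)) = X (e.symm (i0, ρ)) := by
    intro a ρ; apply hX; intro j hj
    have hj' : j ≠ k := by
      intro hh; rw [hh] at hj; exact lt_irrefl _ hj
    rw [happ' a ρ j hj', happ' i0 ρ j hj']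
  calc ∑ ω : Fin mm → Fin n, h (X ω) (ω k)
      = ∑ z : Fin n × ({ j : Fin mm // j ≠ k } → Fin n), h (X (e.symm z)) ((e.symm z) k) :=
        (Equiv.sum_comp e.symm _).symm
    _ = ∑ a : Fin n, ∑ ρ, h (X (e.symm (i0, ρ))) a := by
        rw [Fintype.sum_prod_type]
        refine Finset.sum_congr rfl (fun a _ => Finset.sum_congr rfl (fun ρ _ => ?_))
        rw [happ, key]
    _ = ∑ ρ, ∑ a : Fin n, h (X (e.symm (i0, ρ))) a := Finset.sum_comm
    _ ≤ ∑ ρ, (n : ℝ) * R (X (e.symm (i0, ρ))) := Finset.sum_le_sum (fun ρ _ => hpt _)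
    _ = ∑ ρ, ∑ _a : Fin n, R (X (e.symm (i0, ρ))) := by
        refine Finset.sum_congr rfl (fun ρ _ => ?_)
        rw [Finset.sum_const, Finset.card_univ, Fintype.card_fin, nsmul_eq_mul]
    _ = ∑ a : Fin n, ∑ ρ, R (X (e.symm (a, ρ))) := by
        rw [Finset.sum_comm]
        refine Finset.sum_congr rfl (fun a _ => Finset.sum_congr rfl (fun ρ _ => ?_))
        rw [key a ρ]
    _ = ∑ ω : Fin mm → Fin n, R (X ω) := by
        have h2 : ∑ ω : Fin mm → Fin n, R (X ω)
            = ∑ z : Fin n × ({ j : Fin mm // j ≠ k } → Fin n), R (X (e.symm z)) :=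
          (Equiv.sum_comp e.symm _).symm
        rw [h2, Fintype.sum_prod_type]


end AuxLemmas
set_option maxHeartbeats 2000000 in
/-- per-epoch inequality for momentum-accelerated VR-SGD (Algorithm 3,
Option II) on `F = f + g`, with step `η₀ = 1/(α₁L)`, `α₁ > 2`, momentum weight
`w ∈ (0,1]` satisfying `1 − w − 1/(α₁−1) ≥ 0`. Expectations over the epoch's random
indices are uniform averages over `ω : Fin m → Fin n`. -/
theorem stmt_17 (d n m : ℕ) (hn : 0 < n) (hm : 0 < m)
    (L α₁ w η₀ : ℝ) (hL : 0 < L) (hα₁ : 2 < α₁) (hη₀ : η₀ = 1 / (α₁ * L))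
    (hw0 : 0 < w) (hw1 : w ≤ 1) (hwcond : 1 - w - 1 / (α₁ - 1) ≥ 0)
    (f : Fin n → EuclideanSpace ℝ (Fin d) → ℝ)
    (hdiff : ∀ i, Differentiable ℝ (f i))
    (favg : EuclideanSpace ℝ (Fin d) → ℝ)
    (hfavg : ∀ x, favg x = (1 / n : ℝ) * ∑ i, f i x)
    (g : EuclideanSpace ℝ (Fin d) → ℝ) (hgdiff : Differentiable ℝ g)
    (hconvFi : ∀ i, ConvexOn ℝ Set.univ (fun z => f i z + g z))
    (hlipFi : ∀ i x y,
      ‖(gradient (f i) x + gradient g x) - (gradient (f i) y + gradient g y)‖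
        ≤ L * ‖x - y‖)
    (F : EuclideanSpace ℝ (Fin d) → ℝ) (hF : ∀ x, F x = favg x + g x)
    (xstar : EuclideanSpace ℝ (Fin d)) (hmin : ∀ x, F xstar ≤ F x)
    (xtprev v0 : EuclideanSpace ℝ (Fin d))
    (v x : (Fin m → Fin n) → ℕ → EuclideanSpace ℝ (Fin d))
    (hv0 : ∀ ω, v ω 0 = v0)
    (hx0 : ∀ ω, x ω 0 = w • v0 + (1 - w) • xtprev)
    (hvstep : ∀ ω (k : Fin m),
      v ω ((k : ℕ) + 1) = v ω (k : ℕ) -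
        (η₀ / w) • (gradient (f (ω k)) (x ω (k : ℕ)) - gradient (f (ω k)) xtprev
          + gradient favg xtprev + gradient g (x ω (k : ℕ))))
    (hxstep : ∀ ω (k : Fin m),
      x ω ((k : ℕ) + 1) = xtprev + w • (v ω ((k : ℕ) + 1) - xtprev))
    (xt : (Fin m → Fin n) → EuclideanSpace ℝ (Fin d))
    (hxt : ∀ ω, xt ω = (1 / m : ℝ) • ∑ k ∈ Finset.range m, x ω (k + 1)) :
    (Fintype.card (Fin m → Fin n) : ℝ)⁻¹ *
        ∑ ω : Fin m → Fin n, (F (xt ω) - F xstar)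
      ≤ (1 - w) * (F xtprev - F xstar)
        + (w ^ 2 / (2 * m * η₀)) *
          ((Fintype.card (Fin m → Fin n) : ℝ)⁻¹ *
            ∑ ω : Fin m → Fin n, (‖xstar - v0‖ ^ 2 - ‖xstar - v ω m‖ ^ 2)) := by
  classical
  have hn' : (0:ℝ) < n := by exact_mod_cast hn
  have hm' : (0:ℝ) < m := by exact_mod_cast hm
  have hw' : w ≠ 0 := ne_of_gt hw0
  set β : ℝ := α₁ - 1 with hβdef
  have hβpos : (0:ℝ) < β := by rw [hβdef]; linarith
  have hη : 0 < η₀ := by rw [hη₀]; positivity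
  have hη' : η₀ ≠ 0 := ne_of_gt hη
  set c : ℝ := 1 / (2 * β * L) with hcdef
  set C : ℝ := w ^ 2 / (2 * η₀) with hCdef
  set u : EuclideanSpace ℝ (Fin d) := w • xstar + (1 - w) • xtprev with hudef
  clear_value β c C u
  set Gi : Fin n → EuclideanSpace ℝ (Fin d) → EuclideanSpace ℝ (Fin d) :=
    fun i z => gradient (f i) z + gradient g z with hGidef
  -- gradient facts
  have hgFi : ∀ i z, HasGradientAt (fun y => f i y + g y) (Gi i z) z := fun i z =>
    aux_hga_add ((hdiff i z).hasGradientAt) ((hgdiff z).hasGradientAt)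
  have hgfavg : ∀ z, HasGradientAt favg ((1/n : ℝ) • ∑ i, gradient (f i) z) z := by
    intro z
    have hfe : favg = fun y => (1/n : ℝ) * ∑ i, f i y := funext hfavg
    rw [hfe]
    exact aux_hga_const_mul _ (aux_hga_sum Finset.univ _ _ z
      (fun i _ => (hdiff i z).hasGradientAt))
  have hgradfavg_eq : ∀ z, gradient favg z = (1/n : ℝ) • ∑ i, gradient (f i) z :=
    fun z => (hgfavg z).gradient
  set GradF : EuclideanSpace ℝ (Fin d) → EuclideanSpace ℝ (Fin d) :=
    fun z => gradient favg z + gradient g z with hGradFdef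
  have hgF : ∀ z, HasGradientAt F (GradF z) z := by
    intro z
    have hFe : F = fun y => favg y + g y := funext hF
    rw [hFe]
    have h1 : HasGradientAt favg (gradient favg z) z := by
      rw [hgradfavg_eq z]; exact hgfavg z
    exact aux_hga_add h1 ((hgdiff z).hasGradientAt)
  have hsumGi : ∀ z, ∑ i, Gi i z = (n:ℝ) • GradF z := by
    intro z
    have h1 : ∑ i : Fin n, Gi i z = (∑ i, gradient (f i) z) + (n:ℝ) • gradient g z := by
      simp only [hGidef]
      rw [Finset.sum_add_distrib, Finset.sum_const, Finset.card_univ, Fintype.card_fin]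
      congr 1
      exact (Nat.cast_smul_eq_nsmul ℝ n _).symm
    have h2 : (n:ℝ) • GradF z = (∑ i, gradient (f i) z) + (n:ℝ) • gradient g z := by
      simp only [hGradFdef]
      rw [hgradfavg_eq z, smul_add, smul_smul]
      have : (n:ℝ) * (1/n) = 1 := by field_simp
      rw [this, one_smul]
    rw [h1, h2]
  have hGradF_inv : ∀ z, GradF z = (n:ℝ)⁻¹ • ∑ i, Gi i z := by
    intro z; rw [hsumGi z, smul_smul, inv_mul_cancel₀ (ne_of_gt hn'), one_smul]
  have hlipF : ∀ a b, ‖GradF a - GradF b‖ ≤ L * ‖a - b‖ := by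
    intro a b
    rw [hGradF_inv a, hGradF_inv b, ← smul_sub, ← Finset.sum_sub_distrib, norm_smul]
    have h1 : ‖∑ i, (Gi i a - Gi i b)‖ ≤ (n:ℝ) * (L * ‖a - b‖) := by
      refine le_trans (norm_sum_le _ _) ?_
      calc ∑ i : Fin n, ‖Gi i a - Gi i b‖ ≤ ∑ _i : Fin n, (L * ‖a - b‖) :=
            Finset.sum_le_sum (fun i _ => hlipFi i a b)
        _ = (n:ℝ) * (L * ‖a - b‖) := by
            rw [Finset.sum_const, Finset.card_univ, Fintype.card_fin, nsmul_eq_mul]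
    have h2 : ‖(n:ℝ)⁻¹‖ = (n:ℝ)⁻¹ := by
      rw [Real.norm_eq_abs, abs_of_pos (inv_pos.2 hn')]
    rw [h2]
    calc (n:ℝ)⁻¹ * ‖∑ i, (Gi i a - Gi i b)‖ ≤ (n:ℝ)⁻¹ * ((n:ℝ) * (L * ‖a - b‖)) := by
          apply mul_le_mul_of_nonneg_left h1 (le_of_lt (inv_pos.2 hn'))
      _ = L * ‖a - b‖ := by field_simp
  have hsumFi : ∀ z, ∑ i : Fin n, (f i z + g z) = (n:ℝ) * F z := by
    intro z
    rw [Finset.sum_add_distrib, Finset.sum_const, Finset.card_univ, Fintype.card_fin,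
      nsmul_eq_mul, hF z, hfavg z]
    field_simp
  have hFconv : ConvexOn ℝ Set.univ F := by
    have hFeq : F = fun z => ∑ i : Fin n, (1/n : ℝ) * (f i z + g z) := by
      funext z
      have h1 : ∑ i : Fin n, (1/n : ℝ) * (f i z + g z)
          = (1/n : ℝ) * ((n:ℝ) * F z) := by
        rw [← Finset.mul_sum, hsumFi z]
      rw [h1]
      field_simp
    rw [hFeq]
    exact aux_convexOn_sum _ _ (fun i _ => (hconvFi i).smul (by positivity))
  have hco : ∀ i (a b : EuclideanSpace ℝ (Fin d)),
      ‖Gi i a - Gi i b‖^2 ≤ 2*L*((f i a + g a) - (f i b + g b) - ⟪Gi i b, a - b⟫) :=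
    fun i a b => aux_cocoercive hL (hgFi i) (hconvFi i) (fun p q => hlipFi i p q) a b
  set estim : Fin n → EuclideanSpace ℝ (Fin d) → EuclideanSpace ℝ (Fin d) :=
    fun i p => gradient (f i) p - gradient (f i) xtprev + gradient favg xtprev
      + gradient g p with hestimdef
  have hestim_eq : ∀ i p, estim i p = Gi i p - Gi i xtprev + GradF xtprev := by
    intro i p
    simp only [hestimdef, hGidef, hGradFdef]
    abel
  have hsum_estim : ∀ p, ∑ i, estim i p = (n:ℝ) • GradF p := by
    intro p
    have h1 : ∑ i, estim i p
        = (∑ i, Gi i p) - (∑ i, Gi i xtprev) + (n:ℝ) • GradF xtprev := by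
      rw [Finset.sum_congr rfl (fun i _ => hestim_eq i p)]
      rw [Finset.sum_add_distrib, Finset.sum_sub_distrib, Finset.sum_const,
        Finset.card_univ, Fintype.card_fin]
      congr 1
      exact (Nat.cast_smul_eq_nsmul ℝ n _).symm
    rw [h1, hsumGi, hsumGi]
    abel
  -- per-point (conditional expectation) lemma
  have keypt : ∀ p : EuclideanSpace ℝ (Fin d),
      ∑ i : Fin n, (⟪estim i p, u - p⟫ + c * ‖estim i p - GradF p‖^2)
        ≤ (n:ℝ) * (w * F xstar + (1 - w) * F xtprev - F p) := by
    intro p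
    have hinner : ∑ i, ⟪estim i p, u - p⟫ = (n:ℝ) * ⟪GradF p, u - p⟫ := by
      rw [← sum_inner, hsum_estim p, real_inner_smul_left]
    have hvar : ∑ i, ‖estim i p - GradF p‖^2 ≤ ∑ i, ‖Gi i p - Gi i xtprev‖^2 := by
      have hdecomp : ∀ i : Fin n, estim i p - GradF p
          = (Gi i p - Gi i xtprev) - (GradF p - GradF xtprev) := by
        intro i; rw [hestim_eq i p]; abel
      set ab := GradF p - GradF xtprev with hab
      have hmean : ∑ i, ⟪Gi i p - Gi i xtprev, ab⟫ = (n:ℝ) * ‖ab‖^2 := by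
        rw [← sum_inner, Finset.sum_sub_distrib, hsumGi, hsumGi, ← smul_sub, ← hab,
          real_inner_smul_left, real_inner_self_eq_norm_sq]
      have hexp : ∑ i, ‖estim i p - GradF p‖^2
          = (∑ i, ‖Gi i p - Gi i xtprev‖^2)
            - 2 * ((n:ℝ) * ‖ab‖^2) + (n:ℝ) * ‖ab‖^2 := by
        have h1 : ∀ i : Fin n, ‖estim i p - GradF p‖^2
            = ‖Gi i p - Gi i xtprev‖^2 - 2*⟪Gi i p - Gi i xtprev, ab⟫ + ‖ab‖^2 := by
          intro i
          rw [hdecomp i, norm_sub_sq_real]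
        rw [Finset.sum_congr rfl (fun i _ => h1 i), Finset.sum_add_distrib,
          Finset.sum_sub_distrib, ← Finset.mul_sum, hmean, Finset.sum_const,
          Finset.card_univ, Fintype.card_fin, nsmul_eq_mul]
      rw [hexp]
      nlinarith [sq_nonneg ‖ab‖, hn']
    have hcosum : ∑ i, ‖Gi i p - Gi i xtprev‖^2
        ≤ 2*L*((n:ℝ) * F xtprev - (n:ℝ) * F p - (n:ℝ) * ⟪GradF p, xtprev - p⟫) := by
      calc ∑ i, ‖Gi i p - Gi i xtprev‖^2
          ≤ ∑ i : Fin n, 2*L*((f i xtprev + g xtprev) - (f i p + g p)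
              - ⟪Gi i p, xtprev - p⟫) := by
            refine Finset.sum_le_sum (fun i _ => ?_)
            have h := hco i xtprev p
            rwa [norm_sub_rev] at h
        _ = 2*L*((n:ℝ) * F xtprev - (n:ℝ) * F p - (n:ℝ) * ⟪GradF p, xtprev - p⟫) := by
            rw [← Finset.mul_sum]
            congr 1
            rw [Finset.sum_sub_distrib, Finset.sum_sub_distrib, hsumFi, hsumFi,
              ← sum_inner, hsumGi, real_inner_smul_left]
    have hc2L : c * (2*L) = 1/β := by
      rw [hcdef]; field_simp
    have hs1 : ⟪GradF p, xstar - p⟫ ≤ F xstar - F p := aux_support hgF hFconv p xstar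
    have hs2 : ⟪GradF p, xtprev - p⟫ ≤ F xtprev - F p := aux_support hgF hFconv p xtprev
    have hu : ⟪GradF p, u - p⟫
        = w * ⟪GradF p, xstar - p⟫ + (1-w) * ⟪GradF p, xtprev - p⟫ := by
      have harg : u - p = w • (xstar - p) + (1-w) • (xtprev - p) := by
        rw [hudef]
        module
      rw [harg, inner_add_right, real_inner_smul_right, real_inner_smul_right]
    -- combine
    have step1 : ∑ i : Fin n, (⟪estim i p, u - p⟫ + c * ‖estim i p - GradF p‖^2)
        ≤ (n:ℝ) * ⟪GradF p, u - p⟫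
          + c * (2*L*((n:ℝ) * F xtprev - (n:ℝ) * F p
              - (n:ℝ) * ⟪GradF p, xtprev - p⟫)) := by
      rw [Finset.sum_add_distrib, ← Finset.mul_sum, hinner]
      have hcpos : 0 ≤ c := by rw [hcdef]; positivity
      have := mul_le_mul_of_nonneg_left (le_trans hvar hcosum) hcpos
      linarith
    refine le_trans step1 ?_
    have hbrack : c * (2*L*((n:ℝ) * F xtprev - (n:ℝ) * F p
        - (n:ℝ) * ⟪GradF p, xtprev - p⟫))
        = (n:ℝ) * ((1/β) * (F xtprev - F p - ⟪GradF p, xtprev - p⟫)) := by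
      have h2 : c * (2*L*((n:ℝ) * F xtprev - (n:ℝ) * F p - (n:ℝ) * ⟪GradF p, xtprev - p⟫))
          = (c * (2*L)) * ((n:ℝ) * (F xtprev - F p - ⟪GradF p, xtprev - p⟫)) := by ring
      rw [h2, hc2L]; ring
    rw [hbrack, hu, ← mul_add]
    apply mul_le_mul_of_nonneg_left _ (le_of_lt hn')
    have hwc : (0:ℝ) ≤ 1 - w - 1/β := hwcond
    have hp1 : w * ⟪GradF p, xstar - p⟫ ≤ w * (F xstar - F p) :=
      mul_le_mul_of_nonneg_left hs1 (le_of_lt hw0)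
    have hp2 : (1 - w - 1/β) * ⟪GradF p, xtprev - p⟫ ≤ (1 - w - 1/β) * (F xtprev - F p) :=
      mul_le_mul_of_nonneg_left hs2 hwc
    linarith [hp1, hp2]
  -- affine relation between x and v along the epoch
  have haff : ∀ ω k, k ≤ m → x ω k = xtprev + w • (v ω k - xtprev) := by
    intro ω k hk
    cases k with
    | zero =>
        rw [hx0 ω, hv0 ω]
        module
    | succ j => exact hxstep ω ⟨j, Nat.lt_of_succ_le hk⟩
  -- one-step recursion for x
  have hstep : ∀ ω (k : Fin m),
      x ω ((k:ℕ)+1) = x ω (k:ℕ) - η₀ • estim (ω k) (x ω (k:ℕ)) := by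
    intro ω k
    have h2 : v ω ((k:ℕ)+1) = v ω (k:ℕ) - (η₀/w) • estim (ω k) (x ω (k:ℕ)) := hvstep ω k
    have h3 := haff ω (k:ℕ) (le_of_lt k.2)
    have hkey : w • ((η₀/w) • estim (ω k) (x ω (k:ℕ))) = η₀ • estim (ω k) (x ω (k:ℕ)) := by
      rw [smul_smul]
      congr 1
      field_simp
    rw [hxstep ω k, h2]
    rw [smul_sub w (v ω (k:ℕ) - (η₀/w) • estim (ω k) (x ω (k:ℕ))) xtprev,
      smul_sub w (v ω (k:ℕ)) ((η₀/w) • estim (ω k) (x ω (k:ℕ))), hkey, h3,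
      smul_sub w (v ω (k:ℕ)) xtprev]
    abel
  -- the iterates depend only on the past
  have hdep : ∀ k, k ≤ m → ∀ ω ω' : Fin m → Fin n,
      (∀ j : Fin m, (j:ℕ) < k → ω j = ω' j) → x ω k = x ω' k ∧ v ω k = v ω' k := by
    intro k
    induction k with
    | zero =>
        intro _ ω ω' _
        exact ⟨(hx0 ω).trans (hx0 ω').symm, (hv0 ω).trans (hv0 ω').symm⟩
    | succ j ih =>
        intro hk ω ω' hagree
        have hj : j < m := Nat.lt_of_succ_le hk
        have ihx := ih (le_of_lt hj) ω ω' (fun i hi => hagree i (Nat.lt_succ_of_lt hi))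
        have hωk : ω ⟨j, hj⟩ = ω' ⟨j, hj⟩ := hagree ⟨j, hj⟩ (Nat.lt_succ_self j)
        have hv' : v ω (j+1) = v ω' (j+1) := by
          have e1 : v ω (j+1) = v ω j
              - (η₀/w) • estim (ω ⟨j, hj⟩) (x ω j) := hvstep ω ⟨j, hj⟩
          have e2 : v ω' (j+1) = v ω' j
              - (η₀/w) • estim (ω' ⟨j, hj⟩) (x ω' j) := hvstep ω' ⟨j, hj⟩
          rw [e1, e2, ihx.1, ihx.2, hωk]
        have hx' : x ω (j+1) = x ω' (j+1) := by
          have e1 : x ω (j+1) = xtprev + w • (v ω (j+1) - xtprev) := hxstep ω ⟨j, hj⟩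
          have e2 : x ω' (j+1) = xtprev + w • (v ω' (j+1) - xtprev) := hxstep ω' ⟨j, hj⟩
          rw [e1, e2, hv']
        exact ⟨hx', hv'⟩
  -- expectation step: average the per-point bound over the epoch's randomness
  have avg_step : ∀ k : Fin m,
      ∑ ω : Fin m → Fin n, (⟪estim (ω k) (x ω (k:ℕ)), u - x ω (k:ℕ)⟫
          + c * ‖estim (ω k) (x ω (k:ℕ)) - GradF (x ω (k:ℕ))‖^2)
        ≤ ∑ ω : Fin m → Fin n, (w * F xstar + (1-w) * F xtprev - F (x ω (k:ℕ))) := by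
    intro k
    have hXdep : ∀ ω ω' : Fin m → Fin n,
        (∀ j : Fin m, (j:ℕ) < (k:ℕ) → ω j = ω' j) → x ω (k:ℕ) = x ω' (k:ℕ) :=
      fun ω ω' hag => (hdep (k:ℕ) (le_of_lt k.2) ω ω' hag).1
    have hptn : ∀ p : EuclideanSpace ℝ (Fin d),
        ∑ i : Fin n, (⟪estim i p, u - p⟫ + c * ‖estim i p - GradF p‖^2)
          ≤ (n:ℝ) * (w * F xstar + (1-w) * F xtprev - F p) := keypt
    exact aux_avg hn k (fun ω => x ω (k:ℕ)) hXdep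
      (fun p i => ⟪estim i p, u - p⟫ + c * ‖estim i p - GradF p‖^2)
      (fun p => w * F xstar + (1-w) * F xtprev - F p)
      hptn
  -- deterministic per-step inequality
  have det : ∀ (ω : Fin m → Fin n) (k : Fin m),
      F (x ω ((k:ℕ)+1)) + C * ‖xstar - v ω ((k:ℕ)+1)‖^2
        ≤ F (x ω (k:ℕ)) + (⟪estim (ω k) (x ω (k:ℕ)), u - x ω (k:ℕ)⟫
            + c * ‖estim (ω k) (x ω (k:ℕ)) - GradF (x ω (k:ℕ))‖^2)
          + C * ‖xstar - v ω (k:ℕ)‖^2 := by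
    intro ω k
    set p := x ω (k:ℕ) with hp
    set q := x ω ((k:ℕ)+1) with hq
    set e := estim (ω k) p with he
    set vk := v ω (k:ℕ) with hvk
    set vk1 := v ω ((k:ℕ)+1) with hvk1
    have hqe : q = p - η₀ • e := hstep ω k
    have hv1 : vk1 = vk - (η₀/w) • e := hvstep ω k
    have haffk : p = xtprev + w • (vk - xtprev) := haff ω (k:ℕ) (le_of_lt k.2)
    have haffk1 : q = xtprev + w • (vk1 - xtprev) := haff ω ((k:ℕ)+1) k.2
    have hdesc : F q ≤ F p + ⟪GradF p, q - p⟫ + L/2 * ‖q - p‖^2 :=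
      aux_descent (le_of_lt hL) hgF hlipF p q
    have hqp : q - p = w • (vk1 - vk) := by
      rw [haffk, haffk1, smul_sub, smul_sub, smul_sub]
      abel
    have hee : vk - vk1 = (η₀/w) • e := by rw [hv1]; abel
    have he' : e = (w/η₀) • (vk - vk1) := by
      rw [hee, smul_smul]
      have : w/η₀ * (η₀/w) = 1 := by field_simp
      rw [this, one_smul]
    -- Young's inequality
    have hyoung : ⟪GradF p - e, q - p⟫ ≤ c * ‖e - GradF p‖^2 + (β*L/2) * ‖q - p‖^2 := by
      have h1 : ⟪GradF p - e, q - p⟫ ≤ ‖GradF p - e‖ * ‖q - p‖ := real_inner_le_norm _ _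
      have h2 : ‖GradF p - e‖ = ‖e - GradF p‖ := norm_sub_rev _ _
      have h3 : c * ‖e - GradF p‖^2 + (β*L/2) * ‖q - p‖^2 - ‖e - GradF p‖ * ‖q - p‖
          = c * (‖e - GradF p‖ - (β*L) * ‖q - p‖)^2 := by
        rw [hcdef]
        field_simp
        ring
      have h4 : (0:ℝ) ≤ c * (‖e - GradF p‖ - (β*L) * ‖q - p‖)^2 := by
        apply mul_nonneg _ (sq_nonneg _)
        rw [hcdef]; positivity
      rw [h2] at h1
      linarith
    -- three-point identity
    have h3pt : ⟪e, q - u⟫ = C * (‖vk - xstar‖^2 - ‖vk1 - xstar‖^2 - ‖vk - vk1‖^2) := by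
      have hqu : q - u = w • (vk1 - xstar) := by
        rw [haffk1, hudef]
        module
      have hiden : ‖vk - xstar‖^2
          = ‖vk - vk1‖^2 + 2*⟪vk - vk1, vk1 - xstar⟫ + ‖vk1 - xstar‖^2 := by
        have hsum : vk - xstar = (vk - vk1) + (vk1 - xstar) := by abel
        rw [hsum, norm_add_sq_real]
      rw [he', hqu, real_inner_smul_left, real_inner_smul_right, hCdef]
      linear_combination (-(w^2/(2*η₀))) * hiden
    have hnqp : ‖q - p‖^2 = w^2 * ‖vk - vk1‖^2 := by
      rw [hqp, norm_smul, Real.norm_eq_abs, abs_of_pos hw0, norm_sub_rev]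
      ring
    have hcomb : L/2 * ‖q - p‖^2 + (β*L/2) * ‖q - p‖^2 = C * ‖vk - vk1‖^2 := by
      rw [hnqp, hCdef, hβdef, hη₀]
      have hα₁0 : α₁ ≠ 0 := by positivity
      have hL0 : L ≠ 0 := ne_of_gt hL
      field_simp
      ring
    have hsplit1 : ⟪GradF p, q - p⟫ = ⟪e, q - p⟫ + ⟪GradF p - e, q - p⟫ := by
      rw [inner_sub_left]; ring
    have hsplit2 : ⟪e, q - p⟫ = ⟪e, u - p⟫ + ⟪e, q - u⟫ := by
      rw [← inner_add_right]
      congr 1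
      abel
    have hrev1 : ‖vk - xstar‖^2 = ‖xstar - vk‖^2 := by rw [norm_sub_rev]
    have hrev2 : ‖vk1 - xstar‖^2 = ‖xstar - vk1‖^2 := by rw [norm_sub_rev]
    rw [hrev1, hrev2] at h3pt
    linarith [hdesc, hyoung, h3pt, hcomb, hsplit1, hsplit2]
  -- notation for the final assembly
  set N : ℝ := (Fintype.card (Fin m → Fin n) : ℝ) with hNdef
  have hNpos : (0:ℝ) < N := by
    rw [hNdef]
    have : Nonempty (Fin m → Fin n) := ⟨fun _ => ⟨0, hn⟩⟩
    exact_mod_cast Fintype.card_pos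
  set A : ℝ := w * F xstar + (1-w) * F xtprev with hAdef
  set P : ℕ → ℝ := fun k => ∑ ω : Fin m → Fin n, F (x ω k) with hPdef
  set S : ℕ → ℝ := fun k => ∑ ω : Fin m → Fin n, ‖xstar - v ω k‖^2 with hSdef
  have sum_step : ∀ k : Fin m, P ((k:ℕ)+1) + C * S ((k:ℕ)+1) ≤ N * A + C * S (k:ℕ) := by
    intro k
    have h1 : ∑ ω : Fin m → Fin n,
        (F (x ω ((k:ℕ)+1)) + C * ‖xstar - v ω ((k:ℕ)+1)‖^2)
        ≤ ∑ ω : Fin m → Fin n,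
          (F (x ω (k:ℕ)) + (⟪estim (ω k) (x ω (k:ℕ)), u - x ω (k:ℕ)⟫
            + c * ‖estim (ω k) (x ω (k:ℕ)) - GradF (x ω (k:ℕ))‖^2)
            + C * ‖xstar - v ω (k:ℕ)‖^2) :=
      Finset.sum_le_sum (fun ω _ => det ω k)
    have h2 := avg_step k
    have hL1 : ∑ ω : Fin m → Fin n,
        (F (x ω ((k:ℕ)+1)) + C * ‖xstar - v ω ((k:ℕ)+1)‖^2)
        = P ((k:ℕ)+1) + C * S ((k:ℕ)+1) := by
      rw [Finset.sum_add_distrib, ← Finset.mul_sum]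
    have hR1 : ∑ ω : Fin m → Fin n,
        (F (x ω (k:ℕ)) + (⟪estim (ω k) (x ω (k:ℕ)), u - x ω (k:ℕ)⟫
          + c * ‖estim (ω k) (x ω (k:ℕ)) - GradF (x ω (k:ℕ))‖^2)
          + C * ‖xstar - v ω (k:ℕ)‖^2)
        = P (k:ℕ) + (∑ ω : Fin m → Fin n, (⟪estim (ω k) (x ω (k:ℕ)), u - x ω (k:ℕ)⟫
            + c * ‖estim (ω k) (x ω (k:ℕ)) - GradF (x ω (k:ℕ))‖^2))
          + C * S (k:ℕ) := by
      rw [Finset.sum_add_distrib, Finset.sum_add_distrib, ← Finset.mul_sum]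
    have hR2 : ∑ ω : Fin m → Fin n, (w * F xstar + (1-w) * F xtprev - F (x ω (k:ℕ)))
        = N * A - P (k:ℕ) := by
      rw [Finset.sum_sub_distrib, Finset.sum_const, Finset.card_univ, nsmul_eq_mul,
        hNdef, hAdef]
    rw [hL1, hR1] at h1
    rw [hR2] at h2
    linarith
  have sum_tel : ∑ k ∈ Finset.range m, P (k+1)
      ≤ (m:ℝ) * (N * A) + (C * S 0 - C * S m) := by
    have h : ∀ k ∈ Finset.range m, P (k+1) ≤ N * A + (C * S k - C * S (k+1)) := by
      intro k hk
      have h' : P (k+1) + C * S (k+1) ≤ N * A + C * S k :=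
        sum_step ⟨k, Finset.mem_range.1 hk⟩
      linarith
    have h2 := Finset.sum_le_sum h
    rw [Finset.sum_add_distrib, Finset.sum_const, Finset.card_range, nsmul_eq_mul,
      Finset.sum_range_sub' (fun k => C * S k) m] at h2
    exact h2
  have jensen : ∀ ω, F (xt ω) ≤ (1/m : ℝ) * ∑ k ∈ Finset.range m, F (x ω (k+1)) := by
    intro ω
    have hsum : xt ω = ∑ k ∈ Finset.range m, (1/m : ℝ) • x ω (k+1) := by
      rw [hxt ω, Finset.smul_sum]
    have hj := hFconv.map_sum_le (t := Finset.range m) (w := fun _ => (1/m : ℝ))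
      (p := fun k => x ω (k+1)) (fun _ _ => by positivity)
      (by rw [Finset.sum_const, Finset.card_range, nsmul_eq_mul]; field_simp)
      (fun _ _ => Set.mem_univ _)
    rw [← hsum] at hj
    refine le_trans hj ?_
    simp only [smul_eq_mul]
    rw [Finset.mul_sum]
  have hxtsum : ∑ ω : Fin m → Fin n, F (xt ω)
      ≤ (1/m : ℝ) * ∑ k ∈ Finset.range m, P (k+1) := by
    calc ∑ ω : Fin m → Fin n, F (xt ω)
        ≤ ∑ ω : Fin m → Fin n, (1/m : ℝ) * ∑ k ∈ Finset.range m, F (x ω (k+1)) :=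
          Finset.sum_le_sum (fun ω _ => jensen ω)
      _ = (1/m : ℝ) * ∑ ω : Fin m → Fin n, ∑ k ∈ Finset.range m, F (x ω (k+1)) := by
          rw [← Finset.mul_sum]
      _ = (1/m : ℝ) * ∑ k ∈ Finset.range m, P (k+1) := by
          rw [Finset.sum_comm]
  have hTfin : ∑ ω : Fin m → Fin n, F (xt ω) ≤ N * A + (C/m) * (S 0 - S m) := by
    refine le_trans hxtsum ?_
    calc (1/m : ℝ) * ∑ k ∈ Finset.range m, P (k+1)
        ≤ (1/m : ℝ) * ((m:ℝ) * (N * A) + (C * S 0 - C * S m)) :=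
          mul_le_mul_of_nonneg_left sum_tel (by positivity)
      _ = N * A + (C/m) * (S 0 - S m) := by
          field_simp
  have hS0 : S 0 = N * ‖xstar - v0‖^2 := by
    have h1 : S 0 = ∑ _ω : Fin m → Fin n, ‖xstar - v0‖^2 := by
      refine Finset.sum_congr rfl (fun ω _ => ?_)
      rw [hv0 ω]
    rw [h1, Finset.sum_const, Finset.card_univ, nsmul_eq_mul, hNdef]
  have hgoal1 : ∑ ω : Fin m → Fin n, (F (xt ω) - F xstar)
      = (∑ ω : Fin m → Fin n, F (xt ω)) - N * F xstar := by
    rw [Finset.sum_sub_distrib, Finset.sum_const, Finset.card_univ, nsmul_eq_mul, hNdef]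
  have hgoal2 : ∑ ω : Fin m → Fin n, (‖xstar - v0‖^2 - ‖xstar - v ω m‖^2)
      = S 0 - S m := by
    rw [Finset.sum_sub_distrib]
    congr 1
    rw [hS0, Finset.sum_const, Finset.card_univ, nsmul_eq_mul, hNdef]
  rw [hgoal1, hgoal2]
  have hNne : N ≠ 0 := ne_of_gt hNpos
  have hstep2 : N⁻¹ * ((∑ ω : Fin m → Fin n, F (xt ω)) - N * F xstar)
      ≤ N⁻¹ * ((N * A + (C/m) * (S 0 - S m)) - N * F xstar) :=
    mul_le_mul_of_nonneg_left (by linarith [hTfin]) (inv_nonneg.2 hNpos.le)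
  refine le_trans hstep2 ?_
  have hfin : N⁻¹ * ((N * A + (C/m) * (S 0 - S m)) - N * F xstar)
      = (1-w) * (F xtprev - F xstar) + (w^2/(2*m*η₀)) * (N⁻¹ * (S 0 - S m)) := by
    rw [hAdef, hCdef]
    field_simp
    ring
  rw [hfin]
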